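/- Let x̄ and x̂ be two minimizers of the LASSO objective x ↦ (1/2)‖Ax − b‖² + λ‖x‖₁ for fixed A ∈ ℝ^{m×n}, b ∈ ℝ^m, λ > 0. Then A x̄ = A x̂ and ‖x̄‖₁ = ‖x̂‖₁; that is, the residual b − Ax̄ and the ℓ1-norm value are the same across all minimizers. -/
import Mathlib


open Finset

/-- The ℓ1-norm on ℝⁿ. -/
def l1 {n : ℕ} (x : Fin n → ℝ) : ℝ := ∑ i, |x i|

/-- All LASSO minimizers share the same residual and the same ℓ1-norm value. -/
theorem lasso_residual_and_l1_constant {m n : ℕ} (A : Matrix (Fin m) (Fin n) ℝ)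
    (b : Fin m → ℝ) (lam : ℝ) (hlam : 0 < lam) (xbar xhat : Fin n → ℝ)
    (hxbar : ∀ x : Fin n → ℝ,
      (1/2) * (∑ j, (A.mulVec xbar j - b j)^2) + lam * l1 xbar ≤
      (1/2) * (∑ j, (A.mulVec x j - b j)^2) + lam * l1 x)
    (hxhat : ∀ x : Fin n → ℝ,
      (1/2) * (∑ j, (A.mulVec xhat j - b j)^2) + lam * l1 xhat ≤
      (1/2) * (∑ j, (A.mulVec x j - b j)^2) + lam * l1 x) :
    A.mulVec xbar = A.mulVec xhat ∧ l1 xbar = l1 xhat := by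
  set z : Fin n → ℝ := fun i => (xbar i + xhat i) / 2 with hzdef
  have hAz : ∀ j, A.mulVec z j = (A.mulVec xbar j + A.mulVec xhat j) / 2 := by
    intro j
    simp only [Matrix.mulVec, dotProduct, hzdef]
    rw [← Finset.sum_add_distrib, Finset.sum_div]
    exact Finset.sum_congr rfl (fun i _ => by ring)
  set S1 := ∑ j, (A.mulVec xbar j - b j)^2 with hS1
  set S2 := ∑ j, (A.mulVec xhat j - b j)^2 with hS2
  set D := ∑ j, ((A.mulVec xbar j - A.mulVec xhat j) / 2)^2 with hDdef
  have key : ∑ j, (A.mulVec z j - b j)^2 = (S1 + S2) / 2 - D := by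
    rw [hS1, hS2, ← Finset.sum_add_distrib, Finset.sum_div, hDdef,
      ← Finset.sum_sub_distrib]
    exact Finset.sum_congr rfl (fun j _ => by rw [hAz j]; ring)
  have hl1 : l1 z ≤ (l1 xbar + l1 xhat) / 2 := by
    unfold l1
    rw [← Finset.sum_add_distrib, Finset.sum_div]
    refine Finset.sum_le_sum (fun i _ => ?_)
    have h := abs_add_le (xbar i) (xhat i)
    calc |z i| = |xbar i + xhat i| / 2 := by
          rw [hzdef]; rw [abs_div]; norm_num
      _ ≤ (|xbar i| + |xhat i|) / 2 := by linarith
  have peq : (1/2) * S1 + lam * l1 xbar = (1/2) * S2 + lam * l1 xhat :=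
    le_antisymm (hxbar xhat) (hxhat xbar)
  have hmul : lam * l1 z ≤ lam * ((l1 xbar + l1 xhat) / 2) :=
    mul_le_mul_of_nonneg_left hl1 hlam.le
  have hz := hxbar z
  rw [key] at hz
  have hDle : D ≤ 0 := by nlinarith
  have hDge : 0 ≤ D := Finset.sum_nonneg (fun j _ => sq_nonneg _)
  have hD0 : D = 0 := le_antisymm hDle hDge
  have hterm : ∀ j ∈ Finset.univ, ((A.mulVec xbar j - A.mulVec xhat j) / 2)^2 = 0 :=
    (Finset.sum_eq_zero_iff_of_nonneg (fun j _ => sq_nonneg _)).mp hD0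
  have hA : A.mulVec xbar = A.mulVec xhat := by
    funext j
    have := hterm j (Finset.mem_univ j)
    have h2 := pow_eq_zero_iff (n := 2) (by norm_num) |>.mp this
    linarith [h2]
  have hSeq : S1 = S2 := by
    rw [hS1, hS2, hA]
  have : lam * l1 xbar = lam * l1 xhat := by linarith
  exact ⟨hA, mul_left_cancel₀ hlam.ne' this⟩
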